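/- Let A be a simple probabilistic word automaton (all transition probabilities in {0, 1/2, 1}) with Rabin acceptance. Construct B by adding, for each state q that is the target of some probability-1 transition, a fresh copy q', splitting every probability-1 transition (p,a,q) into two probability-1/2 transitions to q and q' (and duplicating outgoing transitions of q for q'), with q' inheriting membership in each Rabin pair from q. Then for every word w, the measure of accepting runs of B on w equals the measure of accepting runs of A on w; in particular the almost-sure languages and the probable languages of A and B coincide, and B is binary branching. -/

import Mathlib

open MeasureTheory

/-- The set of states occurring infinitely often in `ρ`. -/
def infOcc {Q : Type*} (ρ : ℕ → Q) : Set Q := {q | ∀ N, ∃ n ≥ N, ρ n = q}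

/-- Rabin acceptance for pairs `⟨α_i, β_i⟩`. -/
def rabinAcc {Q : Type*} {k : ℕ} (pairs : Fin k → Set Q × Set Q) (ρ : ℕ → Q) : Prop :=
  ∃ i, (infOcc ρ ∩ (pairs i).1).Nonempty ∧ infOcc ρ ∩ (pairs i).2 = ∅

/-- States of the automaton `B`: the states of `A` together with a fresh copy
`q'` of each state `q` that is the target of some probability-1 transition. -/
def CopyStates {Q A : Type*} (δ : Q → A → Q → ℝ) : Type _ :=
  Q ⊕ {q : Q // ∃ p a, δ p a q = 1}

/-- The underlying `A`-state of a `B`-state. -/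
def under {Q A : Type*} {δ : Q → A → Q → ℝ} : CopyStates δ → Q :=
  Sum.elim id Subtype.val

open Classical in
/-- Transitions of `B`: each probability-1 transition `(p,a,q)` is split into
two probability-1/2 transitions to `q` and its copy `q'`; probability-1/2
transitions are kept; copies behave like the states they copy. -/
noncomputable def deltaB {Q A : Type*} (δ : Q → A → Q → ℝ) :
    CopyStates δ → A → CopyStates δ → ℝ :=
  fun s a s' =>
    match s' with
    | .inl q => if δ (under s) a q = 1 then 1 / 2 else δ (under s) a q
    | .inr q => if δ (under s) a q.val = 1 then 1 / 2 else 0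

open scoped ENNReal
section AuxiliaryDevelopment
open Set

noncomputable section CoinSec

instance : TopologicalSpace (ZMod 2) := ⊥
instance : DiscreteTopology (ZMod 2) := ⟨rfl⟩
instance : BorelSpace (ZMod 2) := ⟨borel_eq_top_of_discrete.symm⟩

abbrev Bits := ℕ → ZMod 2

def coinK : TopologicalSpace.PositiveCompacts Bits :=
  ⟨⟨Set.univ, isCompact_univ⟩, by simp⟩

def coin : Measure Bits := Measure.addHaarMeasure coinK

instance : coin.IsAddLeftInvariant := Measure.isAddLeftInvariant_addHaarMeasure coinK

theorem coin_univ : coin Set.univ = 1 := Measure.addHaarMeasure_self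

instance : IsProbabilityMeasure coin := ⟨coin_univ⟩

/-- full cylinder in Bits -/
def BCyl (n : ℕ) (v : ℕ → ZMod 2) : Set Bits := {b | ∀ i < n, b i = v i}

theorem bcyl_measurable (n : ℕ) (v : ℕ → ZMod 2) : MeasurableSet (BCyl n v) := by
  have : BCyl n v = ⋂ i ∈ Finset.range n, (fun b : Bits => b i) ⁻¹' {v i} := by
    ext b; simp [BCyl]
  rw [this]
  exact MeasurableSet.biInter (Finset.range n).countable_toSet
    (fun i _ => measurable_pi_apply i (MeasurableSet.singleton (v i)))

theorem zmod2_aux : ∀ x y z : ZMod 2, (x + y + z = y ↔ z = x) := by decide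

theorem coin_bcyl_eq (n : ℕ) (v v' : ℕ → ZMod 2) : coin (BCyl n v) = coin (BCyl n v') := by
  have h : BCyl n v = (fun b => (fun i => v i + v' i) + b) ⁻¹' (BCyl n v') := by
    ext b
    simp only [BCyl, mem_preimage, mem_setOf_eq, Pi.add_apply]
    exact ⟨fun hb i hi => (zmod2_aux (v i) (v' i) (b i)).2 (hb i hi),
           fun hb i hi => (zmod2_aux (v i) (v' i) (b i)).1 (hb i hi)⟩
  rw [h, measure_preimage_add]

theorem coin_bcyl (n : ℕ) (v : ℕ → ZMod 2) : coin (BCyl n v) = (2 ^ n)⁻¹ := by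
  classical
  set f : (Fin n → ZMod 2) → Set Bits :=
    fun w => BCyl n (fun i => if h : i < n then w ⟨i, h⟩ else 0) with hf
  have hdisj : Pairwise (Function.onFun Disjoint f) := by
    intro w w' hww'
    obtain ⟨i, hi⟩ : ∃ i, w i ≠ w' i := by
      by_contra h; push_neg at h; exact hww' (funext h)
    refine Set.disjoint_left.2 fun b hb hb' => hi ?_
    have h1 := hb i.1 i.2
    have h2 := hb' i.1 i.2
    simp only [hf, dif_pos i.2] at h1 h2
    rw [← h1, ← h2]
  have hcover : ⋃ w, f w = Set.univ := by
    refine Set.eq_univ_of_forall fun b => Set.mem_iUnion.2 ⟨fun i => b i.1, fun i hi => ?_⟩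
    simp [dif_pos hi]
  have hsum : ∑' w : Fin n → ZMod 2, coin (f w) = 1 := by
    rw [← measure_iUnion hdisj fun w => bcyl_measurable _ _, hcover, coin_univ]
  have hconst : ∀ w : Fin n → ZMod 2, coin (f w) = coin (BCyl n v) :=
    fun w => coin_bcyl_eq _ _ _
  rw [tsum_congr hconst, tsum_fintype, Finset.sum_const, Finset.card_univ] at hsum
  have hcard : (Fintype.card (Fin n → ZMod 2)) = 2 ^ n := by
    simp [Fintype.card_fun]
  rw [hcard, nsmul_eq_mul] at hsum
  have h2 : (((2 ^ n : ℕ) : ℝ≥0∞)) ≠ 0 := by simp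
  have h3 : (((2 ^ n : ℕ) : ℝ≥0∞)) ≠ ⊤ := by simp
  calc coin (BCyl n v) = ((2^n : ℕ) : ℝ≥0∞)⁻¹ * (((2^n : ℕ) : ℝ≥0∞) * coin (BCyl n v)) := by
        rw [← mul_assoc, ENNReal.inv_mul_cancel h2 h3, one_mul]
    _ = (2 ^ n)⁻¹ := by rw [hsum, mul_one]; norm_cast
  
theorem coin_event (n : ℕ) (T : ℕ → Set (ZMod 2)) :
    coin {b | ∀ i < n, b i ∈ T i} =
      ∏ i ∈ Finset.range n, (((T i).ncard : ℝ≥0∞) / 2) := by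
  classical
  haveI : ∀ i : ℕ, Fintype (T i) := fun i => Set.Finite.fintype (Set.toFinite _)
  set I : Finset (Fin n → ZMod 2) := Fintype.piFinset (fun i => (T i.1).toFinset) with hI
  have hev : {b : Bits | ∀ i < n, b i ∈ T i} =
      ⋃ w ∈ I, BCyl n (fun i => if h : i < n then w ⟨i, h⟩ else 0) := by
    ext b
    simp only [Set.mem_setOf_eq, Set.mem_iUnion]
    constructor
    · intro hb
      refine ⟨fun i => b i.1, ?_, fun i hi => ?_⟩
      · simp only [hI, Fintype.mem_piFinset]
        intro i; simpa using hb i.1 i.2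
      · simp [dif_pos hi]
    · rintro ⟨w, hw, hbw⟩ i hi
      have := hbw i hi
      simp only [dif_pos hi] at this
      rw [this]
      simp only [hI, Fintype.mem_piFinset] at hw
      simpa using hw ⟨i, hi⟩
  have hdisj : (I : Set (Fin n → ZMod 2)).Pairwise
      (Function.onFun Disjoint
        (fun w => BCyl n (fun i => if h : i < n then w ⟨i, h⟩ else 0))) := by
    intro w _ w' _ hww'
    obtain ⟨i, hi⟩ : ∃ i, w i ≠ w' i := by
      by_contra h; push_neg at h; exact hww' (funext h)
    refine Set.disjoint_left.2 fun b hb hb' => hi ?_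
    have h1 := hb i.1 i.2
    have h2 := hb' i.1 i.2
    simp only [dif_pos i.2] at h1 h2
    rw [← h1, ← h2]
  rw [hev, measure_biUnion_finset hdisj fun w _ => bcyl_measurable _ _]
  have : ∀ w ∈ I, coin (BCyl n (fun i => if h : i < n then w ⟨i, h⟩ else 0)) = (2 ^ n)⁻¹ :=
    fun w _ => coin_bcyl _ _
  rw [Finset.sum_congr rfl this, Finset.sum_const, nsmul_eq_mul]
  have hcard : (I.card : ℝ≥0∞) = ∏ i ∈ Finset.range n, ((T i).ncard : ℝ≥0∞) := by
    rw [hI, Fintype.card_piFinset]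
    have : ∀ i : ℕ, (T i).toFinset.card = (T i).ncard := fun i => (Set.ncard_eq_toFinset_card' _).symm
    push_cast
    rw [← Fin.prod_univ_eq_prod_range (fun i => ((T i).ncard : ℝ≥0∞)) n]
    exact Finset.prod_congr rfl fun i _ => by rw [this]
  rw [hcard]
  have : ∀ i ∈ Finset.range n, ((T i).ncard : ℝ≥0∞) / 2 = ((T i).ncard : ℝ≥0∞) * 2⁻¹ :=
    fun i _ => ENNReal.div_eq_inv_mul.trans (mul_comm _ _)
  rw [Finset.prod_congr rfl this, Finset.prod_mul_distrib, Finset.prod_const, Finset.card_range,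
    ← ENNReal.inv_pow]

end CoinSec

section Traj

variable {E : Type*}

/-- Trajectory driven by a bit sequence. -/
def traj (init : E) (step : E → ℕ → ZMod 2 → E) (b : Bits) : ℕ → E
  | 0 => init
  | n+1 => step (traj init step b n) n (b n)

/-- The product of discrete σ-algebras on sequences. -/
def mTop (E : Type*) : MeasurableSpace (ℕ → E) :=
  @MeasurableSpace.pi ℕ (fun _ => E) (fun _ => ⊤)

/-- Cylinder set. -/
def Cyl (n : ℕ) (u : ℕ → E) : Set (ℕ → E) := {σ | ∀ i ≤ n, σ i = u i}

theorem measurableSet_eval (i : ℕ) (S : Set E) :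
    MeasurableSet[mTop E] ((fun σ : ℕ → E => σ i) ⁻¹' S) := by
  exact @measurable_pi_apply ℕ (fun _ => E) (fun _ => ⊤) i S trivial

theorem measurableSet_cyl (n : ℕ) (u : ℕ → E) : MeasurableSet[mTop E] (Cyl n u) := by
  have : Cyl n u = ⋂ i ∈ Finset.range (n+1), (fun σ : ℕ → E => σ i) ⁻¹' {u i} := by
    ext σ
    simp [Cyl, Nat.lt_succ_iff]
  rw [this]
  exact MeasurableSet.biInter (Finset.range (n+1)).countable_toSet
    (fun i _ => measurableSet_eval i {u i})

theorem measurable_traj [Countable E] (init : E) (step : E → ℕ → ZMod 2 → E) :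
    @Measurable Bits (ℕ → E) _ (mTop E) (traj init step) := by
  have key : ∀ n, @Measurable Bits E _ ⊤ (fun b => traj init step b n) := by
    intro n
    induction n with
  | zero => exact @measurable_const E Bits ⊤ _ init
  | succ n ih =>
      intro S _
      have hset : (fun b : Bits => traj init step b (n+1)) ⁻¹' S =
          ⋃ e : E, ((fun b : Bits => traj init step b n) ⁻¹' {e}) ∩
            ((fun b : Bits => b n) ⁻¹' {c : ZMod 2 | step e n c ∈ S}) := by
        ext b
        simp only [Set.mem_preimage, Set.mem_iUnion, Set.mem_inter_iff, Set.mem_singleton_iff,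
          Set.mem_setOf_eq]
        exact ⟨fun h => ⟨traj init step b n, rfl, h⟩, fun ⟨e, he, h⟩ => by
          show step (traj init step b n) n (b n) ∈ S; rw [he]; exact h⟩
      rw [hset]
      exact MeasurableSet.iUnion fun e =>
        (ih trivial).inter (measurable_pi_apply n trivial)
  exact (@measurable_pi_iff Bits ℕ (fun _ : ℕ => E) _ (fun _ => ⊤) (traj init step)).mpr key

open Classical in
/-- preimage of a cylinder under the trajectory map -/
theorem traj_preimage_cyl (init : E) (step : E → ℕ → ZMod 2 → E) (n : ℕ) (u : ℕ → E) :
    traj init step ⁻¹' Cyl n u =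
      if u 0 = init then {b : Bits | ∀ i < n, b i ∈ {c | step (u i) i c = u (i+1)}} else ∅ := by
  split_ifs with h0
  · ext b
    simp only [Set.mem_preimage, Cyl, Set.mem_setOf_eq]
    constructor
    · intro hb i hi
      show step (u i) i (b i) = u (i+1)
      have h1 : traj init step b i = u i := hb i (le_of_lt hi)
      have h2 : traj init step b (i+1) = u (i+1) := hb (i+1) hi
      rw [← h1, ← h2]; rfl
    · intro hb i hi
      induction i with
      | zero => exact h0.symm
      | succ j ihj =>
          have hj : traj init step b j = u j := ihj (Nat.le_of_succ_le hi)
          have : traj init step b (j+1) = step (traj init step b j) j (b j) := rfl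
          rw [this, hj]
          exact hb j (Nat.lt_of_succ_le hi)
  · ext b
    simp only [Set.mem_preimage, Cyl, Set.mem_setOf_eq, Set.mem_empty_iff_false, iff_false]
    intro hb
    exact h0 (hb 0 (Nat.zero_le n)).symm

noncomputable def trajMeasure [Countable E] (init : E) (step : E → ℕ → ZMod 2 → E) :
    @Measure (ℕ → E) (mTop E) :=
  @Measure.map Bits (ℕ → E) _ (mTop E) (traj init step) coin

theorem trajMeasure_apply [Countable E] (init : E) (step : E → ℕ → ZMod 2 → E)
    {X : Set (ℕ → E)} (hX : MeasurableSet[mTop E] X) :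
    trajMeasure init step X = coin (traj init step ⁻¹' X) :=
  @Measure.map_apply Bits (ℕ → E) _ (mTop E) coin (traj init step)
    (measurable_traj init step) X hX

theorem trajMeasure_prob [Countable E] (init : E) (step : E → ℕ → ZMod 2 → E) :
    @IsProbabilityMeasure (ℕ → E) (mTop E) (trajMeasure init step) := by
  constructor
  rw [trajMeasure_apply init step MeasurableSet.univ, Set.preimage_univ, coin_univ]

open Classical in
theorem trajMeasure_cyl [Countable E] (init : E) (step : E → ℕ → ZMod 2 → E) (n : ℕ) (u : ℕ → E) :
    trajMeasure init step (Cyl n u) =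
      (if u 0 = init then 1 else 0) *
        ∏ i ∈ Finset.range n,
          ((Set.ncard {c : ZMod 2 | step (u i) i c = u (i+1)} : ℝ≥0∞) / 2) := by
  rw [trajMeasure_apply init step (measurableSet_cyl n u), traj_preimage_cyl]
  split_ifs with h0
  · rw [one_mul]
    exact coin_event n (fun i => {c : ZMod 2 | step (u i) i c = u (i+1)})
  · rw [measure_empty, zero_mul]

end Traj

section Transfer

open scoped symmDiff

variable {E : Type*}

/-- a union of cylinders -/
def IsOpn (U : Set (ℕ → E)) : Prop :=
  ∃ S : Set (Set (ℕ → E)), (∀ C ∈ S, C = ∅ ∨ ∃ n u, C = Cyl n u) ∧ U = ⋃₀ S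

theorem cyl_depends (n : ℕ) (u v : ℕ → E) (h : ∀ i ≤ n, u i = v i) : Cyl n u = Cyl n v := by
  ext σ; constructor <;> intro hσ i hi
  · rw [← h i hi]; exact hσ i hi
  · rw [h i hi]; exact hσ i hi

theorem countable_cyl [Countable E] [Nonempty E] :
    Set.Countable {C : Set (ℕ → E) | C = ∅ ∨ ∃ n u, C = Cyl n u} := by
  classical
  have hsub : {C : Set (ℕ → E) | C = ∅ ∨ ∃ n u, C = Cyl n u} ⊆
      insert ∅ (⋃ n : ℕ, Set.range (fun v : Fin (n+1) → E =>
        Cyl n (fun i => if h : i < n + 1 then v ⟨i, h⟩ else Classical.arbitrary E))) := by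
    rintro C (rfl | ⟨n, u, rfl⟩)
    · exact Set.mem_insert _ _
    · refine Set.mem_insert_of_mem _ (Set.mem_iUnion.2 ⟨n, ⟨fun i => u i.1, ?_⟩⟩)
      refine cyl_depends n _ u fun i hi => ?_
      rw [dif_pos (Nat.lt_succ_of_le hi)]
  exact Set.Countable.mono hsub
    ((Set.countable_iUnion fun n => Set.countable_range _).insert ∅)

theorem cyl_nested {n m : ℕ} {u v : ℕ → E} (hmn : m ≤ n) {σ : ℕ → E}
    (hu : σ ∈ Cyl n u) (hv : σ ∈ Cyl m v) : Cyl n u ⊆ Cyl m v := by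
  intro τ hτ i hi
  rw [hτ i (hi.trans hmn), ← hu i (hi.trans hmn), hv i hi]

theorem isOpn_inter {U V : Set (ℕ → E)} (hU : IsOpn U) (hV : IsOpn V) : IsOpn (U ∩ V) := by
  obtain ⟨S, hS, rfl⟩ := hU
  obtain ⟨T, hT, rfl⟩ := hV
  refine ⟨{A | ∃ C ∈ S, ∃ D ∈ T, A = C ∩ D}, ?_, ?_⟩
  · rintro A ⟨C, hC, D, hD, rfl⟩
    rcases hS C hC with rfl | ⟨n, u, rfl⟩
    · exact Or.inl (Set.empty_inter _)
    rcases hT D hD with rfl | ⟨m, v, rfl⟩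
    · exact Or.inl (Set.inter_empty _)
    rcases Set.eq_empty_or_nonempty (Cyl n u ∩ Cyl m v) with he | ⟨σ, hσu, hσv⟩
    · exact Or.inl he
    rcases le_total m n with hmn | hnm
    · exact Or.inr ⟨n, u, Set.inter_eq_left.2 (cyl_nested hmn hσu hσv)⟩
    · exact Or.inr ⟨m, v, Set.inter_eq_right.2 (cyl_nested hnm hσv hσu)⟩
  · ext σ
    simp only [Set.mem_inter_iff, Set.mem_sUnion, Set.mem_setOf_eq]
    constructor
    · rintro ⟨⟨C, hC, hσC⟩, ⟨D, hD, hσD⟩⟩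
      exact ⟨C ∩ D, ⟨C, hC, D, hD, rfl⟩, hσC, hσD⟩
    · rintro ⟨A, ⟨C, hC, D, hD, rfl⟩, hσC, hσD⟩
      exact ⟨⟨C, hC, hσC⟩, ⟨D, hD, hσD⟩⟩

theorem isOpn_iUnion {f : ℕ → Set (ℕ → E)} (hf : ∀ n, IsOpn (f n)) : IsOpn (⋃ n, f n) := by
  choose S hS hU using hf
  exact ⟨⋃ n, S n, fun C hC => by
    obtain ⟨n, hn⟩ := Set.mem_iUnion.1 hC; exact hS n C hn,
    by rw [Set.sUnion_iUnion]; exact Set.iUnion_congr hU⟩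

theorem isOpn_measurable [Countable E] [Nonempty E] {U : Set (ℕ → E)} (hU : IsOpn U) :
    MeasurableSet[mTop E] U := by
  obtain ⟨S, hS, rfl⟩ := hU
  refine MeasurableSet.sUnion (countable_cyl.mono hS) fun C hC => ?_
  rcases hS C hC with rfl | ⟨n, u, rfl⟩
  · exact @MeasurableSet.empty _ (mTop E)
  · exact measurableSet_cyl n u

/-- disjointification of a union of cylinders -/
theorem isOpn_disjointify [Countable E] [Nonempty E] {U : Set (ℕ → E)} (hU : IsOpn U) :
    ∃ S : Set (Set (ℕ → E)), S.Countable ∧ (∀ C ∈ S, ∃ n u, C = Cyl n u) ∧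
      S.Pairwise Disjoint ∧ U = ⋃₀ S := by
  classical
  obtain ⟨S₀, hS₀, rfl⟩ := hU
  set U := ⋃₀ S₀ with hUdef
  refine ⟨{C | (∃ n u, C = Cyl n u) ∧ C ⊆ U ∧
      ∀ D, (∃ m v, D = Cyl m v) → D ⊆ U → C ⊆ D → D = C}, ?_, ?_, ?_, ?_⟩
  · exact countable_cyl.mono fun C hC => Or.inr hC.1
  · exact fun C hC => hC.1
  · rintro C ⟨⟨n, u, rfl⟩, hCU, hCmax⟩ D ⟨⟨m, v, rfl⟩, hDU, hDmax⟩ hne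
    by_contra hnd
    rw [Set.not_disjoint_iff] at hnd
    obtain ⟨σ, hσC, hσD⟩ := hnd
    rcases le_total m n with hmn | hnm
    · exact hne ((hCmax _ ⟨m, v, rfl⟩ hDU (cyl_nested hmn hσC hσD)).symm)
    · exact hne (hDmax _ ⟨n, u, rfl⟩ hCU (cyl_nested hnm hσD hσC))
  · apply Set.Subset.antisymm
    · intro σ hσ
      obtain ⟨C₀, hC₀S, hσC₀⟩ := hσ
      rcases hS₀ C₀ hC₀S with rfl | ⟨n₀, u₀, rfl⟩
      · exact absurd hσC₀ (Set.notMem_empty σ)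
      have hP : ∃ k : ℕ, ∃ w : ℕ → E, σ ∈ Cyl k w ∧ Cyl k w ⊆ U :=
        ⟨n₀, u₀, hσC₀, Set.subset_sUnion_of_mem hC₀S⟩
      classical
      let n := Nat.find hP
      obtain ⟨w, hσw, hwU⟩ := Nat.find_spec hP
      refine ⟨Cyl n w, ⟨⟨n, w, rfl⟩, hwU, ?_⟩, hσw⟩
      rintro D ⟨m, v, rfl⟩ hDU hsub
      have hσD : σ ∈ Cyl m v := hsub hσw
      have hnm : n ≤ m := by
        by_contra hlt
        push_neg at hlt
        exact Nat.find_min hP hlt ⟨v, hσD, hDU⟩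
      exact Set.Subset.antisymm (cyl_nested hnm hσD hσw) hsub
    · exact Set.sUnion_subset fun C hC => hC.2.1

theorem opn_le {m' : MeasurableSpace (ℕ → E)} [Countable E] [Nonempty E]
    (μ : Measure (ℕ → E)) (ν : @Measure (ℕ → E) (mTop E))
    (h : ∀ n u, μ (Cyl n u) = ν (Cyl n u)) {U : Set (ℕ → E)} (hU : IsOpn U) :
    μ U ≤ ν U := by
  obtain ⟨S, hSc, hScyl, hSd, rfl⟩ := isOpn_disjointify hU
  haveI := hSc.to_subtype
  calc μ (⋃₀ S) = μ (⋃ C : S, (C : Set (ℕ → E))) := by rw [Set.sUnion_eq_iUnion]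
    _ ≤ ∑' C : S, μ (C : Set (ℕ → E)) := measure_iUnion_le _
    _ = ∑' C : S, ν (C : Set (ℕ → E)) := by
        refine tsum_congr fun C => ?_
        obtain ⟨n, u, hnu⟩ := hScyl C C.2
        rw [hnu]; exact h n u
    _ = ν (⋃₀ S) := by
        rw [@measure_sUnion _ (mTop E) ν S hSc hSd
          (fun C hC => by obtain ⟨n, u, rfl⟩ := hScyl C hC; exact measurableSet_cyl n u)]

theorem tsum_half_geo (ε : ℝ≥0∞) : ∑' n : ℕ, ε / 2 * 2⁻¹ ^ n = ε := by
  rw [ENNReal.tsum_mul_left, ENNReal.tsum_geometric, ENNReal.one_sub_inv_two, inv_inv]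
  exact ENNReal.div_mul_cancel (by norm_num) (by norm_num)

theorem transfer [Countable E] [Nonempty E] {m' : MeasurableSpace (ℕ → E)}
    (μ : Measure (ℕ → E)) (ν : @Measure (ℕ → E) (mTop E))
    (hμ : IsProbabilityMeasure μ) (hν : @IsProbabilityMeasure _ (mTop E) ν)
    (h : ∀ n u, μ (Cyl n u) = ν (Cyl n u))
    {X : Set (ℕ → E)} (hX : MeasurableSet[mTop E] X) : μ X = ν X := by
  classical
  haveI := hμ
  haveI := hν
  set Reg : Set (Set (ℕ → E)) := {Y | MeasurableSet[mTop E] Y ∧ ∀ ε : ℝ≥0∞, 0 < ε →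
    (∃ U, IsOpn U ∧ Y ⊆ U ∧ ν U ≤ ν Y + ε) ∧
    (∃ V, IsOpn V ∧ Yᶜ ⊆ V ∧ ν V ≤ ν Yᶜ + ε)} with hReg
  have hcompl : ∀ Y ∈ Reg, Yᶜ ∈ Reg := by
    intro Y hY
    refine ⟨hY.1.compl, fun ε hε => ⟨(hY.2 ε hε).2, ?_⟩⟩
    rw [compl_compl]
    exact (hY.2 ε hε).1
  have hempty : (∅ : Set (ℕ → E)) ∈ Reg := by
    refine ⟨@MeasurableSet.empty _ (mTop E), fun ε hε => ?_⟩
    constructor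
    · exact ⟨∅, ⟨∅, by simp, by simp⟩, subset_rfl, le_self_add⟩
    · refine ⟨Set.univ, ⟨{C | ∃ u : ℕ → E, C = Cyl 0 u}, ?_, ?_⟩, by simp, ?_⟩
      · rintro C ⟨u, rfl⟩; exact Or.inr ⟨0, u, rfl⟩
      · refine (Set.eq_univ_of_forall fun σ => ?_).symm
        exact ⟨Cyl 0 σ, ⟨σ, rfl⟩, fun i hi => by rw [Nat.le_zero.1 hi]⟩
      · rw [Set.compl_empty]; exact le_self_add
  have hunion : ∀ f : ℕ → Set (ℕ → E), (∀ n, f n ∈ Reg) → (⋃ n, f n) ∈ Reg := by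
    intro f hf
    refine ⟨MeasurableSet.iUnion (fun n => (hf n).1), fun ε hε => ?_⟩
    have h2 : (2 : ℝ≥0∞) ≠ 0 := by norm_num
    have h2t : (2 : ℝ≥0∞) ≠ ⊤ := by norm_num
    have hε2 : (0:ℝ≥0∞) < ε/2 := ENNReal.div_pos hε.ne' h2t
    have hpow : ∀ n : ℕ, ((2:ℝ≥0∞)⁻¹ ^ n) ≠ 0 := fun n => pow_ne_zero n (ENNReal.inv_ne_zero.2 h2t)
    have hdiffb : ∀ (W Y : Set (ℕ → E)) (c : ℝ≥0∞), MeasurableSet[mTop E] Y → Y ⊆ W →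
        ν W ≤ ν Y + c → ν (W \ Y) ≤ c := by
      intro W Y c hYm hYW hWb
      have hm := @measure_inter_add_diff _ (mTop E) ν Y W hYm
      rw [Set.inter_eq_right.2 hYW] at hm
      rw [← hm] at hWb
      exact (ENNReal.add_le_add_iff_left (@measure_ne_top _ (mTop E) ν _ Y)).1 hWb
    constructor
    · have hch : ∀ n, ∃ U, IsOpn U ∧ f n ⊆ U ∧ ν U ≤ ν (f n) + ε/2 * 2⁻¹^n := fun n =>
        ((hf n).2 _ (ENNReal.mul_pos hε2.ne' (hpow n))).1
      choose U hUopn hUsub hUb using hch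
      refine ⟨⋃ n, U n, isOpn_iUnion hUopn, Set.iUnion_mono hUsub, ?_⟩
      have hsplit : (⋃ n, U n) ⊆ (⋃ n, f n) ∪ ⋃ n, (U n \ f n) := by
        intro σ hσ
        obtain ⟨n, hn⟩ := Set.mem_iUnion.1 hσ
        by_cases hσf : σ ∈ f n
        · exact Or.inl (Set.mem_iUnion.2 ⟨n, hσf⟩)
        · exact Or.inr (Set.mem_iUnion.2 ⟨n, hn, hσf⟩)
      calc ν (⋃ n, U n) ≤ ν ((⋃ n, f n) ∪ ⋃ n, (U n \ f n)) := measure_mono hsplit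
        _ ≤ ν (⋃ n, f n) + ν (⋃ n, (U n \ f n)) := measure_union_le _ _
        _ ≤ ν (⋃ n, f n) + ∑' n, ν (U n \ f n) := add_le_add_right (measure_iUnion_le _) _
        _ ≤ ν (⋃ n, f n) + ∑' n, ε/2 * 2⁻¹^n :=
            add_le_add_right (ENNReal.tsum_le_tsum fun n =>
              hdiffb _ _ _ (hf n).1 (hUsub n) (hUb n)) _
        _ = ν (⋃ n, f n) + ε := by rw [tsum_half_geo]
    · have hch : ∀ n, ∃ V, IsOpn V ∧ (f n)ᶜ ⊆ V ∧ ν V ≤ ν (f n)ᶜ + (ε/2)/2 * 2⁻¹^n := fun n =>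
        ((hf n).2 _ (ENNReal.mul_pos (ENNReal.div_pos hε2.ne' h2t).ne' (hpow n))).2
      choose V hVopn hVsub hVb using hch
      set g : ℕ → Set (ℕ → E) := fun N => ⋂ n ∈ Finset.range (N+1), V n with hg
      have hgmem : ∀ N σ, σ ∈ g N ↔ ∀ n ≤ N, σ ∈ V n := by
        intro N σ
        simp [hg, Nat.lt_succ_iff]
      have hgopn : ∀ N, IsOpn (g N) := by
        intro N
        induction N with
        | zero =>
            have : g 0 = V 0 := by
              ext σ; rw [hgmem]
              exact ⟨fun h' => h' 0 le_rfl, fun h' n hn => Nat.le_zero.1 hn ▸ h'⟩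
            rw [this]; exact hVopn 0
        | succ N ih =>
            have : g (N+1) = g N ∩ V (N+1) := by
              ext σ
              rw [hgmem, Set.mem_inter_iff, hgmem]
              constructor
              · intro h'
                exact ⟨fun n hn => h' n (hn.trans (Nat.le_succ N)), h' (N+1) le_rfl⟩
              · rintro ⟨h1, h2⟩ n hn
                rcases Nat.lt_succ_iff_lt_or_eq.1 (Nat.lt_succ_of_le hn) with h' | rfl
                · exact h1 n (Nat.lt_succ_iff.1 h')
                · exact h2
            rw [this]; exact isOpn_inter ih (hVopn (N+1))
      have hganti : Antitone g := by
        intro a b hab σ hσ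
        rw [hgmem] at hσ ⊢
        exact fun n hn => hσ n (hn.trans hab)
      have hInt : (⋂ N, g N) = ⋂ n, V n := by
        ext σ
        simp only [Set.mem_iInter]
        constructor
        · intro H n
          exact (hgmem n σ).1 (H n) n le_rfl
        · intro H N
          exact (hgmem N σ).2 fun n _ => H n
      have htend := tendsto_measure_iInter_atTop (μ := ν) (s := g)
        (fun N => (isOpn_measurable (hgopn N)).nullMeasurableSet)
        hganti ⟨0, @measure_ne_top _ (mTop E) ν _ _⟩
      have hlt : ν (⋂ N, g N) < ν (⋂ N, g N) + ε/2 :=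
        ENNReal.lt_add_right (@measure_ne_top _ (mTop E) ν _ _) hε2.ne'
      obtain ⟨N, hN⟩ := (htend.eventually_lt_const hlt).exists
      refine ⟨g N, hgopn N, ?_, ?_⟩
      · intro σ hσ
        rw [Set.mem_compl_iff, Set.mem_iUnion] at hσ
        push_neg at hσ
        exact (hgmem N σ).2 fun n _ => hVsub n (hσ n)
      · have hsub2 : (⋂ M, g M) ⊆ (⋃ n, f n)ᶜ ∪ ⋃ n, (V n \ (f n)ᶜ) := by
          rw [hInt]
          intro σ hσ
          by_cases hx : σ ∈ (⋃ n, f n)ᶜ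
          · exact Or.inl hx
          · rw [Set.mem_compl_iff] at hx
            push_neg at hx
            obtain ⟨n, hn⟩ := Set.mem_iUnion.1 hx
            exact Or.inr (Set.mem_iUnion.2 ⟨n, Set.mem_iInter.1 hσ n,
              fun hc => hc hn⟩)
        calc ν (g N) ≤ ν (⋂ M, g M) + ε/2 := le_of_lt hN
          _ ≤ (ν ((⋃ n, f n)ᶜ) + ε/2) + ε/2 := by
              refine add_le_add_left ?_ _
              calc ν (⋂ M, g M) ≤ ν ((⋃ n, f n)ᶜ ∪ ⋃ n, (V n \ (f n)ᶜ)) := measure_mono hsub2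
                _ ≤ ν ((⋃ n, f n)ᶜ) + ν (⋃ n, (V n \ (f n)ᶜ)) := measure_union_le _ _
                _ ≤ ν ((⋃ n, f n)ᶜ) + ∑' n, ν (V n \ (f n)ᶜ) :=
                    add_le_add_right (measure_iUnion_le _) _
                _ ≤ ν ((⋃ n, f n)ᶜ) + ∑' n, (ε/2)/2 * 2⁻¹^n :=
                    add_le_add_right (ENNReal.tsum_le_tsum fun n =>
                      hdiffb _ _ _ (hf n).1.compl (hVsub n) (hVb n)) _
                _ = ν ((⋃ n, f n)ᶜ) + ε/2 := by rw [tsum_half_geo]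
          _ = ν ((⋃ n, f n)ᶜ) + ε := by rw [add_assoc, ENNReal.add_halves]
  have hgen : ∀ (i : ℕ) (t : Set E), ((fun σ : ℕ → E => σ i) ⁻¹' t) ∈ Reg := by
    intro i t
    have hopen : ∀ (s : Set E), IsOpn ((fun σ : ℕ → E => σ i) ⁻¹' s) := by
      intro s
      refine ⟨{C | ∃ u : ℕ → E, u i ∈ s ∧ C = Cyl i u}, ?_, ?_⟩
      · rintro C ⟨u, hu, rfl⟩; exact Or.inr ⟨i, u, rfl⟩
      · ext σ
        simp only [Set.mem_preimage, Set.mem_sUnion, Set.mem_setOf_eq]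
        constructor
        · intro hσ
          exact ⟨Cyl i σ, ⟨σ, hσ, rfl⟩, fun j hj => rfl⟩
        · rintro ⟨C, ⟨u, hu, rfl⟩, hσC⟩
          have := hσC i le_rfl
          rw [this]; exact hu
    refine ⟨measurableSet_eval i t, fun ε hε => ?_⟩
    constructor
    · exact ⟨_, hopen t, subset_rfl, le_self_add⟩
    · refine ⟨(fun σ : ℕ → E => σ i) ⁻¹' tᶜ, hopen tᶜ, ?_, ?_⟩
      · rw [← Set.preimage_compl]
      · rw [← Set.preimage_compl]; exact le_self_add
  let M : MeasurableSpace (ℕ → E) :=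
    { MeasurableSet' := fun Y => Y ∈ Reg
      measurableSet_empty := hempty
      measurableSet_compl := fun Y hY => hcompl Y hY
      measurableSet_iUnion := fun f hf => hunion f hf }
  have hle : mTop E ≤ M := by
    refine iSup_le fun i => ?_
    rintro s ⟨t, -, rfl⟩
    exact hgen i t
  have hXReg : X ∈ Reg := hle X hX
  have key : ∀ Y ∈ Reg, μ Y ≤ ν Y := by
    intro Y hY
    refine ENNReal.le_of_forall_pos_le_add fun ε hε hfin => ?_
    obtain ⟨U, hUopn, hYU, hUb⟩ := (hY.2 ε (by exact_mod_cast hε)).1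
    calc μ Y ≤ μ U := measure_mono hYU
      _ ≤ ν U := opn_le μ ν h hUopn
      _ ≤ ν Y + ε := hUb
  have h1 : μ X ≤ ν X := key X hXReg
  have h2 : μ Xᶜ ≤ ν Xᶜ := key Xᶜ (hcompl X hXReg)
  have h3 : ν X + ν Xᶜ = 1 := by
    rw [@measure_add_measure_compl _ (mTop E) ν X hX]
    exact hν.measure_univ
  have h4 : (1:ℝ≥0∞) ≤ μ X + μ Xᶜ := by
    rw [← hμ.measure_univ, ← Set.union_compl_self X]
    exact measure_union_le _ _
  have h5 : ν X + ν Xᶜ ≤ μ X + ν Xᶜ := by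
    calc ν X + ν Xᶜ = 1 := h3
      _ ≤ μ X + μ Xᶜ := h4
      _ ≤ μ X + ν Xᶜ := add_le_add_right h2 _
  exact le_antisymm h1 ((ENNReal.add_le_add_iff_right (@measure_ne_top _ (mTop E) ν _ Xᶜ)).1 h5)

end Transfer


section Pigeon

theorem infOcc_comp {E' E : Type*} [Finite E'] (g : E' → E) (τ : ℕ → E') (q : E) :
    q ∈ infOcc (fun n => g (τ n)) ↔ ∃ s, g s = q ∧ s ∈ infOcc τ := by
  constructor
  · intro hq
    by_contra hno
    push_neg at hno
    have hbd : ∀ s : E', ∃ N, g s = q → ∀ n ≥ N, τ n ≠ s := by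
      intro s
      by_cases hgs : g s = q
      · have hs := hno s hgs
        have : ¬∀ N, ∃ n ≥ N, τ n = s := hs
        push_neg at this
        obtain ⟨N, hN⟩ := this
        exact ⟨N, fun _ => hN⟩
      · exact ⟨0, fun hh => absurd hh hgs⟩
    choose N hN using hbd
    obtain ⟨M, hM⟩ := Finite.exists_le N
    obtain ⟨n, hn, hgn⟩ := hq M
    exact hN (τ n) hgn n (le_trans (hM (τ n)) hn) rfl
  · rintro ⟨s, rfl, hs⟩ N
    obtain ⟨n, hn, hτ⟩ := hs N
    exact ⟨n, hn, by simp only []; rw [hτ]⟩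

theorem rabinAcc_comp {E' E : Type*} [Finite E'] {k : ℕ}
    (pairs : Fin k → Set E × Set E) (g : E' → E) (τ : ℕ → E') :
    rabinAcc (fun i => ({s | g s ∈ (pairs i).1}, {s | g s ∈ (pairs i).2})) τ ↔
      rabinAcc pairs (fun n => g (τ n)) := by
  unfold rabinAcc
  refine exists_congr fun i => and_congr ?_ ?_
  · constructor
    · rintro ⟨s, hs1, hs2⟩
      exact ⟨g s, (infOcc_comp g τ (g s)).2 ⟨s, rfl, hs1⟩, hs2⟩
    · rintro ⟨r, hr1, hr2⟩
      obtain ⟨s, rfl, hs⟩ := (infOcc_comp g τ r).1 hr1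
      exact ⟨s, hs, hr2⟩
  · constructor
    · intro hemp
      rw [Set.eq_empty_iff_forall_notMem] at hemp ⊢
      rintro r ⟨hr1, hr2⟩
      obtain ⟨s, rfl, hs⟩ := (infOcc_comp g τ r).1 hr1
      exact hemp s ⟨hs, hr2⟩
    · intro hemp
      rw [Set.eq_empty_iff_forall_notMem] at hemp ⊢
      rintro s ⟨hs1, hs2⟩
      exact hemp (g s) ⟨(infOcc_comp g τ (g s)).2 ⟨s, rfl, hs1⟩, hs2⟩

theorem measurable_infOcc {E : Type*} (q : E) :
    MeasurableSet[mTop E] {ρ : ℕ → E | q ∈ infOcc ρ} := by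
  have hrw : {ρ : ℕ → E | q ∈ infOcc ρ} =
      ⋂ N : ℕ, ⋃ n : ℕ, ⋃ _ : n ≥ N, (fun ρ : ℕ → E => ρ n) ⁻¹' {q} := by
    ext ρ
    simp [infOcc]
  rw [hrw]
  exact MeasurableSet.iInter fun N => MeasurableSet.iUnion fun n =>
    MeasurableSet.iUnion fun _ => measurableSet_eval n {q}

theorem measurable_rabin {E : Type*} [Countable E] {k : ℕ} (pairs : Fin k → Set E × Set E) :
    MeasurableSet[mTop E] {ρ : ℕ → E | rabinAcc pairs ρ} := by
  have hrw : {ρ : ℕ → E | rabinAcc pairs ρ} = ⋃ i : Fin k,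
      ((⋃ q ∈ (pairs i).1, {ρ : ℕ → E | q ∈ infOcc ρ}) ∩
       (⋂ q ∈ (pairs i).2, {ρ : ℕ → E | q ∈ infOcc ρ}ᶜ)) := by
    ext ρ
    simp only [rabinAcc, Set.mem_iUnion, Set.mem_inter_iff, Set.mem_iInter, Set.mem_setOf_eq,
      Set.mem_compl_iff]
    refine exists_congr fun i => and_congr ?_ ?_
    · constructor
      · rintro ⟨q, hq1, hq2⟩; exact ⟨q, hq2, hq1⟩
      · rintro ⟨q, hq1, hq2⟩; exact ⟨q, hq2, hq1⟩
    · rw [Set.eq_empty_iff_forall_notMem]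
      constructor
      · intro hh q hq hq2; exact hh q ⟨hq2, hq⟩
      · rintro hh q ⟨hq1, hq2⟩; exact hh q hq2 hq1
  rw [hrw]
  refine MeasurableSet.iUnion fun i => MeasurableSet.inter ?_ ?_
  · exact MeasurableSet.biUnion (Set.to_countable _) fun q _ => measurable_infOcc q
  · exact MeasurableSet.biInter (Set.to_countable _) fun q _ => (measurable_infOcc q).compl

theorem measurable_valid {E : Type*} [Countable E] (d : ℕ → E → E → Prop) :
    MeasurableSet[mTop E] {ρ : ℕ → E | ∀ n, d n (ρ n) (ρ (n+1))} := by
  have hrw : {ρ : ℕ → E | ∀ n, d n (ρ n) (ρ (n+1))} =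
      ⋂ n : ℕ, ⋃ p : E, ⋃ r : E, ⋃ _ : d n p r,
        ((fun ρ : ℕ → E => ρ n) ⁻¹' {p} ∩ (fun ρ : ℕ → E => ρ (n+1)) ⁻¹' {r}) := by
    ext ρ
    simp only [Set.mem_iInter, Set.mem_iUnion, Set.mem_setOf_eq, Set.mem_inter_iff,
      Set.mem_preimage, Set.mem_singleton_iff]
    exact ⟨fun hh n => ⟨ρ n, ρ (n+1), hh n, rfl, rfl⟩,
      fun hh n => by obtain ⟨p, r, hd, h1, h2⟩ := hh n; rw [h1, h2]; exact hd⟩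
  rw [hrw]
  exact MeasurableSet.iInter fun n => MeasurableSet.iUnion fun p => MeasurableSet.iUnion fun r =>
    MeasurableSet.iUnion fun _ => (measurableSet_eval n {p}).inter (measurableSet_eval (n+1) {r})

end Pigeon

section Auto

variable {Q A : Type*} [Fintype Q]

theorem delta_nonneg {δ : Q → A → Q → ℝ} (hsimple : ∀ q a p, δ q a p = 0 ∨ δ q a p = 1 / 2 ∨ δ q a p = 1)
    (q : Q) (a : A) (p : Q) : 0 ≤ δ q a p := by
  rcases hsimple q a p with h | h | h <;> rw [h] <;> norm_num

theorem one_unique {δ : Q → A → Q → ℝ}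
    (hsimple : ∀ q a p, δ q a p = 0 ∨ δ q a p = 1 / 2 ∨ δ q a p = 1)
    (hsum : ∀ q a, ∑ p, δ q a p = 1) {p : Q} {a : A} {q : Q} (h1 : δ p a q = 1) :
    ∀ r, r ≠ q → δ p a r = 0 := by
  classical
  intro r hr
  by_contra h0
  have hrge : 1/2 ≤ δ p a r := by
    rcases hsimple p a r with h | h | h
    · exact absurd h h0
    · rw [h]
    · rw [h]; norm_num
  have hpair : δ p a q + δ p a r ≤ ∑ x, δ p a x := by
    have : ({q, r} : Finset Q) ⊆ Finset.univ := Finset.subset_univ _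
    calc δ p a q + δ p a r = ∑ x ∈ ({q, r} : Finset Q), δ p a x := by
          rw [Finset.sum_pair (Ne.symm hr)]
      _ ≤ ∑ x, δ p a x := Finset.sum_le_sum_of_subset_of_nonneg this
          (fun x _ _ => delta_nonneg hsimple p a x)
  rw [hsum p a, h1] at hpair
  linarith

open Classical in
theorem halves {δ : Q → A → Q → ℝ}
    (hsimple : ∀ q a p, δ q a p = 0 ∨ δ q a p = 1 / 2 ∨ δ q a p = 1)
    (hsum : ∀ q a, ∑ p, δ q a p = 1) {p : Q} {a : A} (h : ¬∃ q, δ p a q = 1) :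
    ∃ x : Q × Q, x.1 ≠ x.2 ∧ δ p a x.1 = 1/2 ∧ δ p a x.2 = 1/2 := by
  push_neg at h
  set F : Finset Q := Finset.univ.filter (fun q => δ p a q = 1/2) with hF
  have hval : ∀ r : Q, δ p a r = if r ∈ F then 1/2 else 0 := by
    intro r
    by_cases hrF : r ∈ F
    · rw [if_pos hrF]; exact (Finset.mem_filter.1 hrF).2
    · rw [if_neg hrF]
      rcases hsimple p a r with h' | h' | h'
      · exact h'
      · exact absurd (Finset.mem_filter.2 ⟨Finset.mem_univ r, h'⟩) hrF
      · exact absurd h' (h r)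
  have hsum2 : (F.card : ℝ) * (1/2) = 1 := by
    have h1 : ∑ x, δ p a x = ∑ x, (if x ∈ F then (1/2:ℝ) else 0) :=
      Finset.sum_congr rfl fun x _ => hval x
    rw [hsum p a, Finset.sum_ite_mem, Finset.univ_inter, Finset.sum_const, nsmul_eq_mul] at h1
    linarith
  have hcard : F.card = 2 := by
    have : (F.card : ℝ) = 2 := by linarith
    exact_mod_cast this
  obtain ⟨q1, q2, hne, hFeq⟩ := Finset.card_eq_two.1 hcard
  refine ⟨(q1, q2), hne, ?_, ?_⟩
  · have : q1 ∈ F := by rw [hFeq]; exact Finset.mem_insert_self _ _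
    exact (Finset.mem_filter.1 this).2
  · have : q2 ∈ F := by rw [hFeq]; exact Finset.mem_insert_of_mem (Finset.mem_singleton_self _)
    exact (Finset.mem_filter.1 this).2

open Classical in
theorem halves_unique {δ : Q → A → Q → ℝ}
    (hsimple : ∀ q a p, δ q a p = 0 ∨ δ q a p = 1 / 2 ∨ δ q a p = 1)
    (hsum : ∀ q a, ∑ p, δ q a p = 1) {p : Q} {a : A} {q1 q2 : Q} (hne : q1 ≠ q2)
    (h1 : δ p a q1 = 1/2) (h2 : δ p a q2 = 1/2) :
    ∀ r, r ≠ q1 → r ≠ q2 → δ p a r = 0 := by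
  classical
  intro r hr1 hr2
  by_contra h0
  have hrge : 1/2 ≤ δ p a r := by
    rcases hsimple p a r with h' | h' | h'
    · exact absurd h' h0
    · rw [h']
    · rw [h']; norm_num
  have hq1 : q1 ∉ ({q2, r} : Finset Q) := by
    simp only [Finset.mem_insert, Finset.mem_singleton]
    push_neg
    exact ⟨hne, fun hh => hr1 hh.symm⟩
  have hpair : δ p a q1 + (δ p a q2 + δ p a r) ≤ ∑ x, δ p a x := by
    calc δ p a q1 + (δ p a q2 + δ p a r)
        = ∑ x ∈ insert q1 ({q2, r} : Finset Q), δ p a x := by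
          rw [Finset.sum_insert hq1, Finset.sum_pair (fun hh => hr2 hh.symm)]
      _ ≤ ∑ x, δ p a x := Finset.sum_le_sum_of_subset_of_nonneg (Finset.subset_univ _)
          (fun x _ _ => delta_nonneg hsimple p a x)
  rw [hsum p a, h1, h2] at hpair
  linarith

open Classical in
theorem ncard_zmod2 (P : ZMod 2 → Prop) :
    Set.ncard {c : ZMod 2 | P c} = (if P 0 then 1 else 0) + (if P 1 then 1 else 0) := by
  classical
  have hcases : ∀ c : ZMod 2, c = 0 ∨ c = 1 := by decide
  have hne : (0 : ZMod 2) ≠ 1 := by decide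
  by_cases h0 : P 0 <;> by_cases h1 : P 1
  · have hs : {c : ZMod 2 | P c} = Set.univ :=
      Set.eq_univ_of_forall fun c => by rcases hcases c with rfl | rfl <;> assumption
    rw [hs, if_pos h0, if_pos h1, Set.ncard_univ, Nat.card_eq_fintype_card, ZMod.card]
  · have hs : {c : ZMod 2 | P c} = {0} := by
      ext c
      simp only [Set.mem_setOf_eq, Set.mem_singleton_iff]
      rcases hcases c with rfl | rfl
      · exact ⟨fun _ => rfl, fun _ => h0⟩
      · exact ⟨fun hh => absurd hh h1, fun hh => absurd hh.symm hne⟩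
    rw [hs, if_pos h0, if_neg h1, Set.ncard_singleton]
  · have hs : {c : ZMod 2 | P c} = {1} := by
      ext c
      simp only [Set.mem_setOf_eq, Set.mem_singleton_iff]
      rcases hcases c with rfl | rfl
      · exact ⟨fun hh => absurd hh h0, fun hh => absurd hh hne⟩
      · exact ⟨fun _ => rfl, fun _ => h1⟩
    rw [hs, if_neg h0, if_pos h1, Set.ncard_singleton]
  · have hs : {c : ZMod 2 | P c} = ∅ := by
      ext c
      simp only [Set.mem_setOf_eq, Set.mem_empty_iff_false, iff_false]
      rcases hcases c with rfl | rfl <;> assumption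
    rw [hs, if_neg h0, if_neg h1, Set.ncard_empty]

theorem ofReal_half : ENNReal.ofReal (1/2 : ℝ) = 1/2 := by
  rw [ENNReal.ofReal_div_of_pos (by norm_num), ENNReal.ofReal_one, ENNReal.ofReal_ofNat]

open Classical in
noncomputable def stepQ {Q A : Type*} (δ : Q → A → Q → ℝ) (w : ℕ → A) :
    Q → ℕ → ZMod 2 → CopyStates δ := fun p n c =>
  if h1 : ∃ q, δ p (w n) q = 1 then
    (if c = 0 then Sum.inl (Classical.choose h1)
     else Sum.inr ⟨Classical.choose h1, ⟨p, w n, Classical.choose_spec h1⟩⟩)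
  else if h2 : ∃ x : Q × Q, x.1 ≠ x.2 ∧ δ p (w n) x.1 = 1/2 ∧ δ p (w n) x.2 = 1/2 then
    (if c = 0 then Sum.inl (Classical.choose h2).1 else Sum.inl (Classical.choose h2).2)
  else Sum.inl p

theorem under_inl {δ : Q → A → Q → ℝ} (q : Q) : under (Sum.inl q : CopyStates δ) = q := rfl

theorem under_inr {δ : Q → A → Q → ℝ} (r : {q : Q // ∃ p a, δ p a q = 1}) :
    under (Sum.inr r : CopyStates δ) = r.val := rfl

variable {δ : Q → A → Q → ℝ} {w : ℕ → A}

theorem factor_B (hsimple : ∀ q a p, δ q a p = 0 ∨ δ q a p = 1 / 2 ∨ δ q a p = 1)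
    (hsum : ∀ q a, ∑ p, δ q a p = 1) (s s' : CopyStates δ) (n : ℕ) :
    ((Set.ncard {c : ZMod 2 | stepQ δ w (under s) n c = s'} : ℝ≥0∞) / 2) =
      ENNReal.ofReal (deltaB δ s (w n) s') := by
  classical
  set p := under s with hp
  have hone : (1 : ZMod 2) ≠ 0 := by decide
  rw [ncard_zmod2 (fun c => stepQ δ w p n c = s')]
  by_cases h1 : ∃ q, δ p (w n) q = 1
  · have hq : δ p (w n) (Classical.choose h1) = 1 := Classical.choose_spec h1
    set q := Classical.choose h1 with hqdef
    have hstep0 : stepQ δ w p n 0 = Sum.inl q := by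
      rw [stepQ, dif_pos h1]; exact if_pos rfl
    have hstep1 : stepQ δ w p n 1 = Sum.inr ⟨q, ⟨p, w n, hq⟩⟩ := by
      rw [stepQ, dif_pos h1]; exact if_neg hone
    cases s' with
    | inl r =>
      have hδB : deltaB δ s (w n) (Sum.inl r) =
          if δ p (w n) r = 1 then 1/2 else δ p (w n) r := rfl
      have hno1 : stepQ δ w p n 1 ≠ Sum.inl r := by
        rw [hstep1]
        intro hh
        exact Sum.inr_ne_inl hh
      rw [if_neg hno1]
      by_cases hrq : r = q
      · subst hrq
        rw [if_pos (by rw [hstep0]), hδB, if_pos hq, ofReal_half]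
        norm_num
      · have hno0 : stepQ δ w p n 0 ≠ Sum.inl r := by
          rw [hstep0]; intro hh; exact hrq (Sum.inl.inj hh).symm
        rw [if_neg hno0, hδB, if_neg (by rw [one_unique hsimple hsum hq r hrq]; norm_num),
          one_unique hsimple hsum hq r hrq, ENNReal.ofReal_zero]
        norm_num
    | inr r =>
      have hδB : deltaB δ s (w n) (Sum.inr r) =
          if δ p (w n) r.val = 1 then 1/2 else 0 := rfl
      have hno0 : stepQ δ w p n 0 ≠ Sum.inr r := by
        rw [hstep0]; intro hh; exact Sum.inl_ne_inr hh
      rw [if_neg hno0]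
      by_cases hrq : r.val = q
      · have : stepQ δ w p n 1 = Sum.inr r := by
          rw [hstep1]; congr 1; exact Subtype.ext hrq.symm
        rw [if_pos this, hδB, if_pos (by rw [hrq]; exact hq), ofReal_half]
        norm_num
      · have hno1 : stepQ δ w p n 1 ≠ Sum.inr r := by
          rw [hstep1]
          intro hh
          exact hrq (congrArg under hh.symm)
        rw [if_neg hno1, hδB, if_neg (fun hh => hrq (by
          by_contra hne
          exact absurd hh (by rw [one_unique hsimple hsum hq r.val hne]; norm_num))),
          ENNReal.ofReal_zero]
        norm_num
  · obtain ⟨x, hxne, hx1, hx2⟩ := halves hsimple hsum h1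
    have h2 : ∃ x : Q × Q, x.1 ≠ x.2 ∧ δ p (w n) x.1 = 1/2 ∧ δ p (w n) x.2 = 1/2 := ⟨x, hxne, hx1, hx2⟩
    obtain ⟨cne, c1, c2⟩ := Classical.choose_spec h2
    set y := Classical.choose h2 with hydef
    have hstep0 : stepQ δ w p n 0 = Sum.inl y.1 := by
      rw [stepQ, dif_neg h1]; exact (dif_pos h2).trans (if_pos rfl)
    have hstep1 : stepQ δ w p n 1 = Sum.inl y.2 := by
      rw [stepQ, dif_neg h1]; exact (dif_pos h2).trans (if_neg hone)
    push_neg at h1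
    cases s' with
    | inl r =>
      have hδB : deltaB δ s (w n) (Sum.inl r) =
          if δ p (w n) r = 1 then 1/2 else δ p (w n) r := rfl
      rw [hδB, if_neg (h1 r)]
      by_cases hr1 : r = y.1
      · subst hr1
        rw [if_pos (by rw [hstep0]),
          if_neg (show stepQ δ w p n 1 ≠ Sum.inl y.1 by
            rw [hstep1]; intro hh; exact cne (Sum.inl.inj hh).symm), c1, ofReal_half]
        norm_num
      · by_cases hr2 : r = y.2
        · subst hr2
          rw [if_neg (show stepQ δ w p n 0 ≠ Sum.inl y.2 by
              rw [hstep0]; intro hh; exact cne (Sum.inl.inj hh)),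
            if_pos (by rw [hstep1]), c2, ofReal_half]
          norm_num
        · rw [if_neg (by rw [hstep0]; exact fun hh => hr1 (Sum.inl.inj hh).symm),
            if_neg (by rw [hstep1]; intro hh; exact hr2 (Sum.inl.inj hh).symm),
            halves_unique hsimple hsum cne c1 c2 r hr1 hr2, ENNReal.ofReal_zero]
          norm_num
    | inr r =>
      have hδB : deltaB δ s (w n) (Sum.inr r) =
          if δ p (w n) r.val = 1 then 1/2 else 0 := rfl
      rw [hδB, if_neg (h1 r.val), ENNReal.ofReal_zero,
        if_neg (show stepQ δ w p n 0 ≠ Sum.inr r by rw [hstep0]; intro hh; exact Sum.inl_ne_inr hh),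
        if_neg (show stepQ δ w p n 1 ≠ Sum.inr r by rw [hstep1]; intro hh; exact Sum.inl_ne_inr hh)]
      norm_num

theorem factor_A (hsimple : ∀ q a p, δ q a p = 0 ∨ δ q a p = 1 / 2 ∨ δ q a p = 1)
    (hsum : ∀ q a, ∑ p, δ q a p = 1) (p : Q) (n : ℕ) (r : Q) :
    ((Set.ncard {c : ZMod 2 | under (stepQ δ w p n c) = r} : ℝ≥0∞) / 2) =
      ENNReal.ofReal (δ p (w n) r) := by
  classical
  have hone : (1 : ZMod 2) ≠ 0 := by decide
  rw [ncard_zmod2 (fun c => under (stepQ δ w p n c) = r)]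
  by_cases h1 : ∃ q, δ p (w n) q = 1
  · have hq : δ p (w n) (Classical.choose h1) = 1 := Classical.choose_spec h1
    set q := Classical.choose h1 with hqdef
    have hu0 : under (stepQ δ w p n 0) = q := by
      rw [stepQ, dif_pos h1]; exact congrArg under (if_pos rfl)
    have hu1 : under (stepQ δ w p n 1) = q := by
      rw [stepQ, dif_pos h1]; exact congrArg under (if_neg hone)
    by_cases hrq : r = q
    · rw [if_pos (by rw [hu0, hrq]), if_pos (by rw [hu1, hrq]), hrq, hq, ENNReal.ofReal_one]
      norm_num
      exact ENNReal.div_self (by norm_num) (by norm_num)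
    · rw [if_neg (by rw [hu0]; exact fun hh => hrq hh.symm),
        if_neg (by rw [hu1]; exact fun hh => hrq hh.symm),
        one_unique hsimple hsum hq r hrq, ENNReal.ofReal_zero]
      norm_num
  · obtain ⟨x, hxne, hx1, hx2⟩ := halves hsimple hsum h1
    have h2 : ∃ x : Q × Q, x.1 ≠ x.2 ∧ δ p (w n) x.1 = 1/2 ∧ δ p (w n) x.2 = 1/2 :=
      ⟨x, hxne, hx1, hx2⟩
    obtain ⟨cne, c1, c2⟩ := Classical.choose_spec h2
    set y := Classical.choose h2 with hydef
    have hu0 : under (stepQ δ w p n 0) = y.1 := by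
      rw [show stepQ δ w p n 0 = Sum.inl y.1 from (by rw [stepQ, dif_neg h1]; exact (dif_pos h2).trans (if_pos rfl))]; rfl
    have hu1 : under (stepQ δ w p n 1) = y.2 := by
      rw [show stepQ δ w p n 1 = Sum.inl y.2 from (by rw [stepQ, dif_neg h1]; exact (dif_pos h2).trans (if_neg hone))]; rfl
    by_cases hr1 : r = y.1
    · rw [if_pos (by rw [hu0, hr1]),
        if_neg (by rw [hu1]; intro hh; exact cne (hh.trans hr1).symm),
        hr1, c1, ofReal_half]
      norm_num
    · by_cases hr2 : r = y.2
      · rw [if_neg (by rw [hu0]; intro hh; exact cne (hh.trans hr2)),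
          if_pos (by rw [hu1, hr2]), hr2, c2, ofReal_half]
        norm_num
      · rw [if_neg (by rw [hu0]; exact fun hh => hr1 hh.symm),
          if_neg (by rw [hu1]; exact fun hh => hr2 hh.symm),
          halves_unique hsimple hsum cne c1 c2 r hr1 hr2, ENNReal.ofReal_zero]
        norm_num

theorem stepQ_pos_B (hsimple : ∀ q a p, δ q a p = 0 ∨ δ q a p = 1 / 2 ∨ δ q a p = 1)
    (hsum : ∀ q a, ∑ p, δ q a p = 1) (s : CopyStates δ) (n : ℕ) (c : ZMod 2) :
    0 < deltaB δ s (w n) (stepQ δ w (under s) n c) := by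
  classical
  set p := under s with hpdef
  by_cases h1 : ∃ q, δ p (w n) q = 1
  · have hq : δ p (w n) (Classical.choose h1) = 1 := Classical.choose_spec h1
    by_cases hc : c = 0
    · rw [show stepQ δ w p n c = Sum.inl (Classical.choose h1) from (by rw [stepQ, dif_pos h1]; exact if_pos hc)]
      show (0:ℝ) < if δ p (w n) (Classical.choose h1) = 1 then 1/2 else _
      rw [if_pos hq]; norm_num
    · rw [show stepQ δ w p n c = Sum.inr ⟨Classical.choose h1, ⟨p, w n, Classical.choose_spec h1⟩⟩ from (by rw [stepQ, dif_pos h1]; exact if_neg hc)]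
      show (0:ℝ) < if δ p (w n) (Classical.choose h1) = 1 then 1/2 else 0
      rw [if_pos hq]; norm_num
  · obtain ⟨x, hxne, hx1, hx2⟩ := halves hsimple hsum h1
    have h2 : ∃ x : Q × Q, x.1 ≠ x.2 ∧ δ p (w n) x.1 = 1/2 ∧ δ p (w n) x.2 = 1/2 :=
      ⟨x, hxne, hx1, hx2⟩
    obtain ⟨cne, c1, c2⟩ := Classical.choose_spec h2
    have hno : ∀ r, δ p (w n) r ≠ 1 := by push_neg at h1; exact h1
    by_cases hc : c = 0
    · rw [show stepQ δ w p n c = Sum.inl (Classical.choose h2).1 from (by rw [stepQ, dif_neg h1]; exact (dif_pos h2).trans (if_pos hc))]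
      show (0:ℝ) < if δ p (w n) (Classical.choose h2).1 = 1 then 1/2 else δ p (w n) (Classical.choose h2).1
      rw [if_neg (hno _), c1]; norm_num
    · rw [show stepQ δ w p n c = Sum.inl (Classical.choose h2).2 from (by rw [stepQ, dif_neg h1]; exact (dif_pos h2).trans (if_neg hc))]
      show (0:ℝ) < if δ p (w n) (Classical.choose h2).2 = 1 then 1/2 else δ p (w n) (Classical.choose h2).2
      rw [if_neg (hno _), c2]; norm_num

theorem stepQ_pos_A (hsimple : ∀ q a p, δ q a p = 0 ∨ δ q a p = 1 / 2 ∨ δ q a p = 1)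
    (hsum : ∀ q a, ∑ p, δ q a p = 1) (p : Q) (n : ℕ) (c : ZMod 2) :
    0 < δ p (w n) (under (stepQ δ w p n c)) := by
  classical
  by_cases h1 : ∃ q, δ p (w n) q = 1
  · have hq : δ p (w n) (Classical.choose h1) = 1 := Classical.choose_spec h1
    by_cases hc : c = 0
    · rw [show stepQ δ w p n c = Sum.inl (Classical.choose h1) from (by rw [stepQ, dif_pos h1]; exact if_pos hc), under_inl, hq]; norm_num
    · rw [show stepQ δ w p n c = Sum.inr ⟨Classical.choose h1, ⟨p, w n, Classical.choose_spec h1⟩⟩ from (by rw [stepQ, dif_pos h1]; exact if_neg hc), under_inr, hq]; norm_num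
  · obtain ⟨x, hxne, hx1, hx2⟩ := halves hsimple hsum h1
    have h2 : ∃ x : Q × Q, x.1 ≠ x.2 ∧ δ p (w n) x.1 = 1/2 ∧ δ p (w n) x.2 = 1/2 :=
      ⟨x, hxne, hx1, hx2⟩
    obtain ⟨cne, c1, c2⟩ := Classical.choose_spec h2
    by_cases hc : c = 0
    · rw [show stepQ δ w p n c = Sum.inl (Classical.choose h2).1 from (by rw [stepQ, dif_neg h1]; exact (dif_pos h2).trans (if_pos hc)), under_inl, c1]; norm_num
    · rw [show stepQ δ w p n c = Sum.inl (Classical.choose h2).2 from (by rw [stepQ, dif_neg h1]; exact (dif_pos h2).trans (if_neg hc)), under_inl, c2]; norm_num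

end Auto

theorem under_traj {Q A : Type*} (δ : Q → A → Q → ℝ) (w : ℕ → A) (qi : Q) (b : Bits) (n : ℕ) :
    under (traj (Sum.inl qi : CopyStates δ) (fun s k c => stepQ δ w (under s) k c) b n) =
      traj qi (fun pp k c => under (stepQ δ w pp k c)) b n := by
  induction n with
  | zero => rfl
  | succ n ih =>
      show under (stepQ δ w (under (traj (Sum.inl qi : CopyStates δ)
        (fun s k c => stepQ δ w (under s) k c) b n)) n (b n)) = _
      rw [ih]
      rfl

end AuxiliaryDevelopment

open Classical

/-- From a simple probabilistic Rabin word automaton `A` (probabilities in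
`{0,1/2,1}`) one obtains, by duplicating targets of probability-1 transitions,
a binary-branching Rabin automaton `B` (probabilities in `{0,1/2}`, with the
copies inheriting the Rabin pairs) such that for every word `w` the measure of
accepting runs of `B` on `w` equals that of `A` on `w`; in particular the
almost-sure and probable languages coincide. -/
theorem simple_to_binary_branching {Q A : Type*} [Fintype Q] [DecidableEq Q]
    [MeasurableSpace Q] {k : ℕ}
    (δ : Q → A → Q → ℝ) (qi : Q) (pairs : Fin k → Set Q × Set Q)
    (hsimple : ∀ q a p, δ q a p = 0 ∨ δ q a p = 1 / 2 ∨ δ q a p = 1)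
    (hsum : ∀ q a, ∑ p, δ q a p = 1)
    (w : ℕ → A)
    -- the run measure of `A` on `w`
    (μA : Measure (ℕ → Q)) [IsProbabilityMeasure μA]
    (hμA : ∀ (n : ℕ) (ρ : ℕ → Q), μA {σ | ∀ i ≤ n, σ i = ρ i} =
      (if ρ 0 = qi then 1 else 0) *
        ∏ i ∈ Finset.range n, ENNReal.ofReal (δ (ρ i) (w i) (ρ (i + 1))))
    -- the run measure of `B` on `w`
    (mQ' : MeasurableSpace (CopyStates δ))
    (μB : Measure (ℕ → CopyStates δ)) [IsProbabilityMeasure μB]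
    (hμB : ∀ (n : ℕ) (τ : ℕ → CopyStates δ), μB {σ | ∀ i ≤ n, σ i = τ i} =
      (if τ 0 = Sum.inl qi then 1 else 0) *
        ∏ i ∈ Finset.range n, ENNReal.ofReal (deltaB δ (τ i) (w i) (τ (i + 1)))) :
    -- `B` is binary branching
    (∀ (s : CopyStates δ) (a : A) (s' : CopyStates δ),
      deltaB δ s a s' = 0 ∨ deltaB δ s a s' = 1 / 2) ∧
    -- the measures of accepting runs coincide
    μA {ρ : ℕ → Q | (ρ 0 = qi ∧ ∀ n, 0 < δ (ρ n) (w n) (ρ (n + 1))) ∧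
        rabinAcc pairs ρ} =
      μB {τ : ℕ → CopyStates δ |
        (τ 0 = Sum.inl qi ∧ ∀ n, 0 < deltaB δ (τ n) (w n) (τ (n + 1))) ∧
        rabinAcc (fun i => ({s | under s ∈ (pairs i).1}, {s | under s ∈ (pairs i).2})) τ} ∧
    -- in particular almost-sure and probable acceptance coincide
    (μA {ρ : ℕ → Q | (ρ 0 = qi ∧ ∀ n, 0 < δ (ρ n) (w n) (ρ (n + 1))) ∧
        rabinAcc pairs ρ} = 1 ↔
      μB {τ : ℕ → CopyStates δ |
        (τ 0 = Sum.inl qi ∧ ∀ n, 0 < deltaB δ (τ n) (w n) (τ (n + 1))) ∧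
        rabinAcc (fun i => ({s | under s ∈ (pairs i).1}, {s | under s ∈ (pairs i).2})) τ} = 1) ∧
    (0 < μA {ρ : ℕ → Q | (ρ 0 = qi ∧ ∀ n, 0 < δ (ρ n) (w n) (ρ (n + 1))) ∧
        rabinAcc pairs ρ} ↔
      0 < μB {τ : ℕ → CopyStates δ |
        (τ 0 = Sum.inl qi ∧ ∀ n, 0 < deltaB δ (τ n) (w n) (τ (n + 1))) ∧
        rabinAcc (fun i => ({s | under s ∈ (pairs i).1}, {s | under s ∈ (pairs i).2})) τ}) := by
  classical
  haveI hQne : Nonempty Q := ⟨qi⟩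
  haveI hCSfin : Finite (CopyStates δ) := by unfold CopyStates; infer_instance
  haveI hCSne : Nonempty (CopyStates δ) := ⟨Sum.inl qi⟩
  -- part 1 : binary branching
  have part1 : ∀ (s : CopyStates δ) (a : A) (s' : CopyStates δ),
      deltaB δ s a s' = 0 ∨ deltaB δ s a s' = 1 / 2 := by
    intro s a s'
    cases s' with
    | inl q =>
        have hδB : deltaB δ s a (Sum.inl q) =
            if δ (under s) a q = 1 then 1/2 else δ (under s) a q := rfl
        rw [hδB]
        split_ifs with h
        · exact Or.inr rfl
        · rcases hsimple (under s) a q with h0 | h5 | h1'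
          · exact Or.inl h0
          · exact Or.inr h5
          · exact absurd h1' h
    | inr r =>
        have hδB : deltaB δ s a (Sum.inr r) =
            if δ (under s) a r.val = 1 then 1/2 else 0 := rfl
        rw [hδB]
        split_ifs with h
        · exact Or.inr rfl
        · exact Or.inl rfl
  -- step functions
  set FB : CopyStates δ → ℕ → ZMod 2 → CopyStates δ := fun s k c => stepQ δ w (under s) k c
    with hFBdef
  set FA : Q → ℕ → ZMod 2 → Q := fun pp k c => under (stepQ δ w pp k c) with hFAdef
  set νA : @Measure (ℕ → Q) (mTop Q) := trajMeasure qi FA with hνAdef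
  set νB : @Measure (ℕ → CopyStates δ) (mTop (CopyStates δ)) :=
    trajMeasure (Sum.inl qi : CopyStates δ) FB with hνBdef
  set SA : Set (ℕ → Q) := {ρ : ℕ → Q | (ρ 0 = qi ∧ ∀ n, 0 < δ (ρ n) (w n) (ρ (n + 1))) ∧
      rabinAcc pairs ρ} with hSAdef
  set SB : Set (ℕ → CopyStates δ) := {τ : ℕ → CopyStates δ |
      (τ 0 = Sum.inl qi ∧ ∀ n, 0 < deltaB δ (τ n) (w n) (τ (n + 1))) ∧
      rabinAcc (fun i => ({s | under s ∈ (pairs i).1}, {s | under s ∈ (pairs i).2})) τ}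
    with hSBdef
  -- measurability
  have hSAm : MeasurableSet[mTop Q] SA := by
    have hrw : SA = ((fun ρ : ℕ → Q => ρ 0) ⁻¹' {qi} ∩
        {ρ : ℕ → Q | ∀ n, 0 < δ (ρ n) (w n) (ρ (n+1))}) ∩ {ρ : ℕ → Q | rabinAcc pairs ρ} := by
      ext ρ
      simp only [hSAdef, Set.mem_setOf_eq, Set.mem_inter_iff, Set.mem_preimage,
        Set.mem_singleton_iff]
    rw [hrw]
    exact (MeasurableSet.inter (measurableSet_eval 0 {qi})
      (measurable_valid (fun n p r => 0 < δ p (w n) r))).inter (measurable_rabin pairs)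
  have hSBm : MeasurableSet[mTop (CopyStates δ)] SB := by
    have hrw : SB = ((fun τ : ℕ → CopyStates δ => τ 0) ⁻¹' {Sum.inl qi} ∩
        {τ : ℕ → CopyStates δ | ∀ n, 0 < deltaB δ (τ n) (w n) (τ (n+1))}) ∩
        {τ : ℕ → CopyStates δ | rabinAcc
          (fun i => ({s | under s ∈ (pairs i).1}, {s | under s ∈ (pairs i).2})) τ} := by
      ext τ
      simp only [hSBdef, Set.mem_setOf_eq, Set.mem_inter_iff, Set.mem_preimage,
        Set.mem_singleton_iff]
      exact Iff.rfl
    rw [hrw]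
    exact (MeasurableSet.inter (measurableSet_eval 0 {Sum.inl qi})
      (measurable_valid (fun n s s' => 0 < deltaB δ s (w n) s'))).inter
      (measurable_rabin _)
  -- cylinder agreement
  have hcylA : ∀ (n : ℕ) (u : ℕ → Q), μA (Cyl n u) = νA (Cyl n u) := by
    intro n u
    calc μA (Cyl n u) = (if u 0 = qi then 1 else 0) *
        ∏ i ∈ Finset.range n, ENNReal.ofReal (δ (u i) (w i) (u (i + 1))) := hμA n u
      _ = νA (Cyl n u) := by
          rw [hνAdef, trajMeasure_cyl]
          have hprod : (∏ i ∈ Finset.range n, ENNReal.ofReal (δ (u i) (w i) (u (i + 1)))) =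
              ∏ i ∈ Finset.range n,
                ((Set.ncard {c : ZMod 2 | FA (u i) i c = u (i+1)} : ℝ≥0∞) / 2) := by
            refine Finset.prod_congr rfl fun i _ => ?_
            simp only [hFAdef]
            exact (factor_A hsimple hsum (u i) i (u (i+1))).symm
          rw [hprod]
          by_cases h0 : u 0 = qi
          · rw [if_pos h0, if_pos h0]
          · rw [if_neg h0, if_neg h0]
  have hcylB : ∀ (n : ℕ) (u : ℕ → CopyStates δ), μB (Cyl n u) = νB (Cyl n u) := by
    intro n u
    calc μB (Cyl n u) = (if u 0 = Sum.inl qi then 1 else 0) *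
        ∏ i ∈ Finset.range n, ENNReal.ofReal (deltaB δ (u i) (w i) (u (i + 1))) := hμB n u
      _ = νB (Cyl n u) := by
          rw [hνBdef]; refine Eq.trans ?_ (trajMeasure_cyl (Sum.inl qi : CopyStates δ) FB n u).symm
          have hprod : (∏ i ∈ Finset.range n, ENNReal.ofReal (deltaB δ (u i) (w i) (u (i + 1)))) =
              ∏ i ∈ Finset.range n,
                ((Set.ncard {c : ZMod 2 | FB (u i) i c = u (i+1)} : ℝ≥0∞) / 2) := by
            refine Finset.prod_congr rfl fun i _ => ?_
            simp only [hFBdef]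
            exact (factor_B hsimple hsum (u i) (u (i+1)) i).symm
          exact congrArg _ hprod
  -- transfer
  have hA : μA SA = νA SA :=
    transfer μA νA inferInstance (trajMeasure_prob qi FA) hcylA hSAm
  have hB : μB SB = νB SB :=
    transfer μB νB inferInstance (trajMeasure_prob (Sum.inl qi : CopyStates δ) FB) hcylB hSBm
  -- validity of trajectories
  have hposA : ∀ (b : Bits) (n : ℕ), 0 < δ (traj qi FA b n) (w n) (traj qi FA b (n+1)) := by
    intro b n
    exact stepQ_pos_A hsimple hsum (traj qi FA b n) n (b n)
  have hposB : ∀ (b : Bits) (n : ℕ),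
      0 < deltaB δ (traj (Sum.inl qi : CopyStates δ) FB b n) (w n)
        (traj (Sum.inl qi : CopyStates δ) FB b (n+1)) := by
    intro b n
    exact stepQ_pos_B hsimple hsum (traj (Sum.inl qi : CopyStates δ) FB b n) n (b n)
  -- reduce to rabin sets
  have hνArabin : νA SA = νA {ρ : ℕ → Q | rabinAcc pairs ρ} := by
    rw [hνAdef, trajMeasure_apply qi FA hSAm,
      trajMeasure_apply qi FA (measurable_rabin pairs)]
    congr 1
    ext b
    simp only [Set.mem_preimage, hSAdef, Set.mem_setOf_eq]
    exact ⟨fun hh => hh.2, fun hh => ⟨⟨rfl, hposA b⟩, hh⟩⟩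
  have hνBrabin : νB SB = νB {τ : ℕ → CopyStates δ | rabinAcc
      (fun i => ({s | under s ∈ (pairs i).1}, {s | under s ∈ (pairs i).2})) τ} := by
    rw [hνBdef]; refine (trajMeasure_apply (Sum.inl qi : CopyStates δ) FB hSBm).trans
      (Eq.trans ?_ (trajMeasure_apply (Sum.inl qi : CopyStates δ) FB (measurable_rabin _)).symm)
    congr 1
    ext b
    simp only [Set.mem_preimage, hSBdef, Set.mem_setOf_eq]
    exact ⟨fun hh => hh.2, fun hh => ⟨⟨rfl, hposB b⟩, hh⟩⟩
  -- identify the two rabin measures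
  have hlink : νB {τ : ℕ → CopyStates δ | rabinAcc
      (fun i => ({s | under s ∈ (pairs i).1}, {s | under s ∈ (pairs i).2})) τ} =
      νA {ρ : ℕ → Q | rabinAcc pairs ρ} := by
    rw [hνBdef, hνAdef]; refine (trajMeasure_apply (Sum.inl qi : CopyStates δ) FB (measurable_rabin _)).trans
      (Eq.trans ?_ (trajMeasure_apply qi FA (measurable_rabin pairs)).symm)
    congr 1
    ext b
    simp only [Set.mem_preimage, Set.mem_setOf_eq]
    rw [show (fun i => ({s | under s ∈ (pairs i).1}, {s | under s ∈ (pairs i).2})) =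
      (fun i => ({s : CopyStates δ | under s ∈ (pairs i).1},
                 {s : CopyStates δ | under s ∈ (pairs i).2})) from rfl]
    refine (rabinAcc_comp pairs (under : CopyStates δ → Q) (traj (Sum.inl qi : CopyStates δ) FB b)).trans ?_
    have : (fun n => under (traj (Sum.inl qi : CopyStates δ) FB b n)) = traj qi FA b :=
      funext (under_traj δ w qi b)
    exact Iff.of_eq (congrArg (rabinAcc pairs) this)
  have main : μA SA = μB SB := by
    rw [hA, hB, hνArabin, hνBrabin, hlink]
  exact ⟨part1, main, by rw [main], by rw [main]⟩
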